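/- Let f : X → X be an expansive homeomorphism of a compact metric space X with expansiveness constant δ, and suppose X has no stable points and no unstable points. Then for every 0 < ε < δ and every η > 0 there exists K ∈ ℕ such that for all x ∈ X the dynamical ball B(x, K, ε) = { y : d(fⁱ(x), fⁱ(y)) ≤ ε for 0 ≤ i ≤ K } does not contain the ball B_η(x), and likewise for the backward dynamical ball. -/

import Mathlib

open Metric Filter Topology Set

/-- Local stable set of an invertible map. -/
def Ws {X : Type*} [MetricSpace X] (f : Equiv.Perm X) (ε : ℝ) (x : X) : Set X :=
  {y | ∀ n : ℕ, dist ((f ^ n) x) ((f ^ n) y) ≤ ε}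

/-- Local unstable set of an invertible map. -/
def Wu {X : Type*} [MetricSpace X] (f : Equiv.Perm X) (ε : ℝ) (x : X) : Set X :=
  {y | ∀ n : ℕ, dist ((f ^ (-(n : ℤ))) x) ((f ^ (-(n : ℤ))) y) ≤ ε}

/-- A point is stable if its local stable sets form a neighborhood basis. -/
def IsStablePoint {X : Type*} [MetricSpace X] (f : Equiv.Perm X) (x : X) : Prop :=
  ∀ ε : ℝ, 0 < ε → ∃ η > 0, Metric.ball x η ⊆ Ws f ε x

/-- A point is unstable if its local unstable sets form a neighborhood basis. -/
def IsUnstablePoint {X : Type*} [MetricSpace X] (f : Equiv.Perm X) (x : X) : Prop :=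
  ∀ ε : ℝ, 0 < ε → ∃ η > 0, Metric.ball x η ⊆ Wu f ε x

section Aux
variable {X : Type*} [MetricSpace X]

lemma contPow (f : Equiv.Perm X) (hf : Continuous f) :
    ∀ n : ℕ, Continuous fun x : X => (f ^ n) x := by
  intro n
  induction n with
  | zero => simpa using continuous_id'
  | succ n ih =>
    have h : (fun x : X => (f ^ (n + 1)) x) = fun x => (f ^ n) (f x) := by
      funext x; rw [pow_succ, Equiv.Perm.mul_apply]
    rw [h]; exact ih.comp hf

lemma contZpow (f : Equiv.Perm X) (hf : Continuous f) (hf' : Continuous f.symm) :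
    ∀ z : ℤ, Continuous fun x : X => (f ^ z) x := by
  have hinv : Continuous fun x : X => f⁻¹ x := by
    simpa [Equiv.Perm.inv_def] using hf'
  intro z
  cases z with
  | ofNat n => simpa [zpow_natCast] using contPow f hf n
  | negSucc n =>
    have h1 : (f : Equiv.Perm X) ^ (Int.negSucc n) = (f⁻¹) ^ (n + 1) := by
      rw [zpow_negSucc, ← inv_pow]
    rw [h1]
    exact contPow f⁻¹ hinv (n + 1)

variable [CompactSpace X]

lemma exp_unif (f : Equiv.Perm X) (hf : Continuous f) (hf' : Continuous f.symm)
    (δ : ℝ) (hδ : 0 < δ)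
    (hexp : ∀ x y : X, (∀ n : ℤ, dist ((f ^ n) x) ((f ^ n) y) ≤ δ) → x = y)
    (ε' : ℝ) (hε' : 0 < ε') :
    ∃ N : ℕ, ∀ y z : X,
      (∀ n : ℤ, |n| ≤ (N : ℤ) → dist ((f ^ n) y) ((f ^ n) z) ≤ δ) → dist y z ≤ ε' := by
  by_contra h
  push_neg at h
  choose u v h1 h2 using h
  set w : ℕ → X × X := fun N => (u N, v N) with hw
  obtain ⟨p, -, φ, hφ, hlim⟩ := isCompact_univ.tendsto_subseq (fun n => mem_univ (w n))
  have hlim1 : Tendsto (fun k => u (φ k)) atTop (𝓝 p.1) :=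
    (continuous_fst.tendsto p).comp hlim
  have hlim2 : Tendsto (fun k => v (φ k)) atTop (𝓝 p.2) :=
    (continuous_snd.tendsto p).comp hlim
  have claim : ∀ n : ℤ, dist ((f ^ n) p.1) ((f ^ n) p.2) ≤ δ := by
    intro n
    have hc := contZpow f hf hf' n
    have tend : Tendsto (fun k => dist ((f ^ n) (u (φ k))) ((f ^ n) (v (φ k)))) atTop
        (𝓝 (dist ((f ^ n) p.1) ((f ^ n) p.2))) :=
      ((hc.tendsto p.1).comp hlim1).dist ((hc.tendsto p.2).comp hlim2)
    refine le_of_tendsto tend ?_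
    filter_upwards [eventually_ge_atTop n.natAbs] with k hk
    refine h1 (φ k) n ?_
    rw [Int.abs_eq_natAbs]
    exact_mod_cast le_trans hk (hφ.le_apply)
  have heq := hexp p.1 p.2 claim
  have hge : ε' ≤ dist p.1 p.2 := by
    refine ge_of_tendsto (hlim1.dist hlim2) ?_
    filter_upwards with k
    exact (h2 (φ k)).le
  rw [heq, dist_self] at hge
  linarith

lemma isStable_of_ball_subset (f : Equiv.Perm X) (hf : Continuous f) (hf' : Continuous f.symm)
    (δ : ℝ) (hδ : 0 < δ)
    (hexp : ∀ x y : X, (∀ n : ℤ, dist ((f ^ n) x) ((f ^ n) y) ≤ δ) → x = y)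
    {ε r : ℝ} (hε : 0 < ε) (hεδ : ε ≤ δ) {x : X} (hr : 0 < r)
    (hsub : Metric.ball x r ⊆ Ws f ε x) : IsStablePoint f x := by
  intro ε'' hε''
  obtain ⟨N, hN⟩ := exp_unif f hf hf' δ hδ hexp ε'' hε''
  have tail : ∀ y ∈ Metric.ball x r, ∀ n : ℕ, N ≤ n →
      dist ((f ^ n) x) ((f ^ n) y) ≤ ε'' := by
    intro y hy n hn
    have hy' := hsub hy
    have main : dist ((f ^ (n : ℤ)) x) ((f ^ (n : ℤ)) y) ≤ ε'' := by
      refine hN _ _ ?_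
      intro m hm
      have habs := abs_le.1 hm
      have hmn : 0 ≤ m + (n : ℤ) := by omega
      have key : ∀ w : X, (f ^ m) ((f ^ (n : ℤ)) w) = (f ^ (m + (n : ℤ))) w := by
        intro w; rw [zpow_add, Equiv.Perm.mul_apply]
      rw [key, key]
      have h1 : (f : Equiv.Perm X) ^ (m + (n : ℤ)) = f ^ (m + (n : ℤ)).toNat := by
        rw [← zpow_natCast, Int.toNat_of_nonneg hmn]
      rw [h1]
      exact le_trans (hy' _) hεδ
    simpa [zpow_natCast] using main
  have head : ∀ M : ℕ, ∃ η > 0, ∀ y : X, dist x y < η →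
      ∀ n ≤ M, dist ((f ^ n) x) ((f ^ n) y) ≤ ε'' := by
    intro M
    induction M with
    | zero =>
      refine ⟨ε'', hε'', fun y hy n hn => ?_⟩
      obtain rfl : n = 0 := Nat.le_zero.mp hn
      simpa using hy.le
    | succ M ih =>
      obtain ⟨η₁, hη₁, H1⟩ := ih
      have hc := (contPow f hf (M + 1)).continuousAt (x := x)
      obtain ⟨η₂, hη₂, H2⟩ := Metric.continuousAt_iff.1 hc ε'' hε''
      refine ⟨min η₁ η₂, lt_min hη₁ hη₂, fun y hy n hn => ?_⟩
      rcases Nat.lt_succ_iff_lt_or_eq.mp (Nat.lt_succ_of_le hn) with h | rfl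
      · exact H1 y (lt_of_lt_of_le hy (min_le_left _ _)) n (Nat.lt_succ_iff.mp h)
      · have := H2 (show dist y x < η₂ by rw [dist_comm]; exact lt_of_lt_of_le hy (min_le_right _ _))
        rw [dist_comm]
        exact this.le
  obtain ⟨η₀, hη₀, H0⟩ := head N
  refine ⟨min η₀ r, lt_min hη₀ hr, fun y hy => ?_⟩
  intro n
  have hd : dist x y < min η₀ r := by rw [dist_comm]; exact mem_ball.mp hy
  rcases le_or_gt n N with h | h
  · exact H0 y (lt_of_lt_of_le hd (min_le_left _ _)) n h
  · exact tail y (mem_ball.mpr (by rw [dist_comm]; exact lt_of_lt_of_le hd (min_le_right _ _))) n h.le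

lemma forward_escape (f : Equiv.Perm X) (hf : Continuous f) (hf' : Continuous f.symm)
    (δ : ℝ) (hδ : 0 < δ)
    (hexp : ∀ x y : X, (∀ n : ℤ, dist ((f ^ n) x) ((f ^ n) y) ≤ δ) → x = y)
    (hnostable : ∀ x : X, ¬ IsStablePoint f x)
    (ε : ℝ) (hε : 0 < ε) (hεδ : ε < δ) (η : ℝ) (hη : 0 < η) :
    ∃ K : ℕ, ∀ x : X,
      ¬ (Metric.ball x η ⊆ {y | ∀ i : ℕ, i ≤ K → dist ((f ^ i) x) ((f ^ i) y) ≤ ε}) := by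
  by_contra h
  push_neg at h
  choose u hu using h
  obtain ⟨p, -, φ, hφ, hlim⟩ := isCompact_univ.tendsto_subseq (fun n => mem_univ (u n))
  have claim : Metric.ball p (η / 2) ⊆ Ws f ε p := by
    intro y hy
    intro n
    have hd : dist y p < η / 2 := mem_ball.mp hy
    have hc := contPow f hf n
    have tend : Tendsto (fun k => dist ((f ^ n) (u (φ k))) ((f ^ n) y)) atTop
        (𝓝 (dist ((f ^ n) p) ((f ^ n) y))) :=
      ((hc.tendsto p).comp hlim).dist tendsto_const_nhds
    refine le_of_tendsto tend ?_
    have hev : ∀ᶠ k in atTop, dist (u (φ k)) p < η - dist y p :=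
      hlim.eventually (eventually_nhds_iff.mpr
        ⟨Metric.ball p (η - dist y p), fun z hz => mem_ball.mp hz,
          isOpen_ball, mem_ball_self (by linarith)⟩)
    filter_upwards [hev, eventually_ge_atTop n] with k hk1 hk2
    have hball : y ∈ Metric.ball (u (φ k)) η := by
      rw [mem_ball]
      calc dist y (u (φ k)) ≤ dist y p + dist p (u (φ k)) := dist_triangle _ _ _
        _ < dist y p + (η - dist y p) := by rw [dist_comm p]; linarith
        _ = η := by ring
    exact hu (φ k) hball n (le_trans hk2 hφ.le_apply)
  exact hnostable p (isStable_of_ball_subset f hf hf' δ hδ hexp hε hεδ.le (half_pos hη) claim)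
end Aux

/-- Uniform non-stability: with no stable and no unstable points, for every
0 < ε < δ and η > 0 there is K such that no forward (or backward) K-dynamical
ε-ball contains a metric η-ball. -/
theorem uniform_dynamical_ball_escape {X : Type*} [MetricSpace X] [CompactSpace X]
    (f : Equiv.Perm X) (hf : Continuous f) (hf' : Continuous f.symm)
    (δ : ℝ) (hδ : 0 < δ)
    (hexp : ∀ x y : X, (∀ n : ℤ, dist ((f ^ n) x) ((f ^ n) y) ≤ δ) → x = y)
    (hnostable : ∀ x : X, ¬ IsStablePoint f x)
    (hnounstable : ∀ x : X, ¬ IsUnstablePoint f x) :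
    ∀ ε : ℝ, 0 < ε → ε < δ → ∀ η : ℝ, 0 < η → ∃ K : ℕ, ∀ x : X,
      ¬ (Metric.ball x η ⊆
          {y | ∀ i : ℕ, i ≤ K → dist ((f ^ i) x) ((f ^ i) y) ≤ ε}) ∧
      ¬ (Metric.ball x η ⊆
          {y | ∀ i : ℕ, i ≤ K → dist ((f ^ (-(i : ℤ))) x) ((f ^ (-(i : ℤ))) y) ≤ ε}) := by
  intro ε hε hεδ η hη
  have hinvpow : ∀ i : ℕ, (f⁻¹ : Equiv.Perm X) ^ i = f ^ (-(i : ℤ)) := by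
    intro i; rw [inv_pow, ← zpow_natCast, ← zpow_neg]
  have hg : Continuous (f⁻¹ : Equiv.Perm X) := by simpa [Equiv.Perm.inv_def] using hf'
  have hg' : Continuous (f⁻¹ : Equiv.Perm X).symm := by
    simpa [Equiv.Perm.inv_def] using hf
  have hexpg : ∀ x y : X, (∀ n : ℤ, dist (((f⁻¹ : Equiv.Perm X) ^ n) x)
      (((f⁻¹ : Equiv.Perm X) ^ n) y) ≤ δ) → x = y := by
    intro x y h
    refine hexp x y fun n => ?_
    have hne : (f⁻¹ : Equiv.Perm X) ^ (-n) = f ^ n := by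
      rw [inv_zpow, zpow_neg, inv_inv]
    have := h (-n)
    rwa [hne] at this
  have hnostableg : ∀ x : X, ¬ IsStablePoint (f⁻¹ : Equiv.Perm X) x := by
    intro x hs
    refine hnounstable x fun ε hε => ?_
    obtain ⟨η, hη, hsub⟩ := hs ε hε
    refine ⟨η, hη, fun y hy => ?_⟩
    have := hsub hy
    intro n
    have := this n
    rwa [hinvpow n] at this
  obtain ⟨K₁, hK₁⟩ := forward_escape f hf hf' δ hδ hexp hnostable ε hε hεδ η hη
  obtain ⟨K₂, hK₂⟩ := forward_escape (f⁻¹ : Equiv.Perm X) hg hg' δ hδ hexpg hnostableg ε hε hεδ η hη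
  refine ⟨max K₁ K₂, fun x => ⟨?_, ?_⟩⟩
  · intro contra
    exact hK₁ x fun y hy i hi => contra hy i (le_trans hi (le_max_left _ _))
  · intro contra
    refine hK₂ x fun y hy i hi => ?_
    rw [hinvpow i]
    exact contra hy i (le_trans hi (le_max_right _ _))
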